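/- arXiv:2007.12363 — 5 statements merged into one kernel-verified Lean document; each statement's English description precedes it below -/
import Mathlib

section
/- Let d ≥ 1, f : (Fin d → ℝ) × ℝ → (Fin d → ℝ), h > 0, γ ∈ (0,1), γ₂ = (1−γ)/(2−γ), γ₃ = 1/(γ(2−γ)), and let uⁿ ∈ ℝ^d and tₙ ∈ ℝ. Suppose u^{nγ} ∈ ℝ^d satisfies the TR stage u^{nγ} − (γh/2)·f(u^{nγ}, tₙ+γh) = uⁿ + (γh/2)·f(uⁿ, tₙ), and u^{n+1} ∈ ℝ^d satisfies the BDF2 stage u^{n+1} − γ₂h·f(u^{n+1}, tₙ+h) = (1−γ₃)uⁿ + γ₃u^{nγ}. Define k₁ = f(uⁿ, tₙ), k₂ = f(u^{nγ}, tₙ+γh), k₃ = f(u^{n+1}, tₙ+h). Then u^{nγ} = uⁿ + (γh/2)k₁ + (γh/2)k₂ and u^{n+1} = uⁿ + h·( (1/(2(2−γ)))·k₁ + (1/(2(2−γ)))·k₂ + ((1−γ)/(2−γ))·k₃ ); that is, the two-stage TR-BDF2 method coincides with a three-stage diagonally implicit Runge–Kutta method. -/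
/-- The two-stage TR-BDF2 method coincides with a three-stage DIRK method. -/
theorem trbdf2_is_dirk
    (d : ℕ) (hd : 1 ≤ d)
    (f : (Fin d → ℝ) × ℝ → (Fin d → ℝ))
    (h γ : ℝ) (hh : 0 < h) (hγ : γ ∈ Set.Ioo (0 : ℝ) 1)
    (γ₂ γ₃ : ℝ) (hγ₂ : γ₂ = (1 - γ) / (2 - γ)) (hγ₃ : γ₃ = 1 / (γ * (2 - γ)))
    (tn : ℝ) (un unγ un1 : Fin d → ℝ)
    (hTR : unγ - (γ * h / 2) • f (unγ, tn + γ * h) = un + (γ * h / 2) • f (un, tn))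
    (hBDF : un1 - (γ₂ * h) • f (un1, tn + h) = (1 - γ₃) • un + γ₃ • unγ)
    (k₁ k₂ k₃ : Fin d → ℝ)
    (hk₁ : k₁ = f (un, tn)) (hk₂ : k₂ = f (unγ, tn + γ * h))
    (hk₃ : k₃ = f (un1, tn + h)) :
    unγ = un + (γ * h / 2) • k₁ + (γ * h / 2) • k₂ ∧
      un1 = un + h • ((1 / (2 * (2 - γ))) • k₁ + (1 / (2 * (2 - γ))) • k₂ +
        ((1 - γ) / (2 - γ)) • k₃) := by
  obtain ⟨hγ0, hγ1⟩ := hγ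
  have h2γ : (2 : ℝ) - γ ≠ 0 := by linarith
  have hγne : γ ≠ 0 := ne_of_gt hγ0
  subst hk₁ hk₂ hk₃ hγ₂ hγ₃
  constructor
  · funext i
    have hT := congrFun hTR i
    simp only [Pi.sub_apply, Pi.add_apply, Pi.smul_apply, smul_eq_mul] at hT ⊢
    linarith
  · funext i
    have hT := congrFun hTR i
    have hB := congrFun hBDF i
    simp only [Pi.sub_apply, Pi.add_apply, Pi.smul_apply, smul_eq_mul] at hT hB ⊢
    field_simp at hB ⊢
    nlinarith [hT, hB, sq_nonneg γ]
end

section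
/- Let γ ∈ (0,1), γ₂ = (1−γ)/(2−γ), γ₃ = 1/(γ(2−γ)). For every z ∈ ℂ with Re z ≤ 0, one has (1−γz/2)(1−γ₂z) ≠ 0 and |R(z)| ≤ 1, where R(z) = ((1−γ₃)(1−γz/2) + γ₃(1+γz/2)) / ((1−γz/2)(1−γ₂z)). That is, the TR-BDF2 method is A-stable for every γ ∈ (0,1). -/
open Complex

/-- The stability function of the TR-BDF2 method. -/
noncomputable def trbdf2StabilityFunction (γ γ₂ γ₃ : ℝ) (z : ℂ) : ℂ :=
  ((1 - (γ₃ : ℂ)) * (1 - (γ : ℂ) * z / 2) + (γ₃ : ℂ) * (1 + (γ : ℂ) * z / 2)) /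
    ((1 - (γ : ℂ) * z / 2) * (1 - (γ₂ : ℂ) * z))

lemma trbdf2_key (a b c x y : ℝ) (ha : 0 ≤ a) (hb : 0 ≤ b) (hc : 0 ≤ c)
    (habc : a^2 + b^2 = c^2) (hx : x ≤ 0) :
    (1 + c*x)^2 + c^2*y^2 ≤ ((1-a*x)^2 + a^2*y^2) * ((1-b*x)^2 + b^2*y^2) := by
  have hab : 0 ≤ a*b := mul_nonneg ha hb
  have h1 : c ≤ a + b := by nlinarith [sq_nonneg (a+b-c)]
  have h2 : 1 - c*x ≤ (1-a*x)*(1-b*x) := by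
    nlinarith [mul_nonneg hab (sq_nonneg x), mul_nonneg (sub_nonneg.2 h1) (neg_nonneg.2 hx)]
  have h3 : (1+c*x)^2 ≤ ((1-a*x)*(1-b*x))^2 := by
    nlinarith [mul_nonneg hc (neg_nonneg.2 hx), h2]
  have h4 : c^2 ≤ a^2*(1-b*x)^2 + b^2*(1-a*x)^2 := by
    nlinarith [mul_nonneg (mul_nonneg (mul_nonneg ha ha) hb) (neg_nonneg.2 hx),
      mul_nonneg (mul_nonneg (mul_nonneg hb hb) ha) (neg_nonneg.2 hx),
      mul_nonneg (sq_nonneg (a*b)) (sq_nonneg x)]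
  nlinarith [h3, mul_le_mul_of_nonneg_left h4 (sq_nonneg y),
    mul_nonneg (sq_nonneg (a*b)) (sq_nonneg (y*y))]

lemma trbdf2_nsq_sub (t : ℝ) (z : ℂ) :
    Complex.normSq (1 - (t:ℂ)*z) = (1 - t*z.re)^2 + t^2*z.im^2 := by
  simp [Complex.normSq_apply, Complex.sub_re, Complex.sub_im, Complex.mul_re, Complex.mul_im]
  ring

lemma trbdf2_nsq_add (t : ℝ) (z : ℂ) :
    Complex.normSq (1 + (t:ℂ)*z) = (1 + t*z.re)^2 + t^2*z.im^2 := by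
  simp [Complex.normSq_apply, Complex.add_re, Complex.add_im, Complex.mul_re, Complex.mul_im]
  ring

/-- The TR-BDF2 method is A-stable for every γ ∈ (0,1). -/
theorem trbdf2_A_stable
    (γ : ℝ) (hγ : γ ∈ Set.Ioo (0 : ℝ) 1)
    (γ₂ γ₃ : ℝ) (hγ₂ : γ₂ = (1 - γ) / (2 - γ)) (hγ₃ : γ₃ = 1 / (γ * (2 - γ))) :
    ∀ z : ℂ, z.re ≤ 0 →
      (1 - (γ : ℂ) * z / 2) * (1 - (γ₂ : ℂ) * z) ≠ 0 ∧
        ‖trbdf2StabilityFunction γ γ₂ γ₃ z‖ ≤ 1 := by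
  obtain ⟨hγ0, hγ1⟩ := hγ
  subst hγ₂ hγ₃
  intro z hz
  have h2γ : (0:ℝ) < 2 - γ := by linarith
  set a : ℝ := γ/2 with hadef
  set b : ℝ := (1 - γ) / (2 - γ) with hbdef
  set c : ℝ := 1/(2-γ) - γ/2 with hcdef
  have ha : 0 ≤ a := by positivity
  have hb : 0 ≤ b := by rw [hbdef]; exact div_nonneg (by linarith) (by linarith)
  have hc : 0 ≤ c := by
    rw [hcdef, sub_nonneg, div_le_div_iff₀ two_pos h2γ]
    nlinarith [sq_nonneg (1-γ)]
  have habc : a^2 + b^2 = c^2 := by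
    rw [hadef, hbdef, hcdef]
    field_simp
    ring
  -- rewrite the complex factors
  have hw1 : (1 - (γ:ℂ) * z / 2) = 1 - ((a:ℝ):ℂ)*z := by
    rw [hadef]; push_cast; ring
  have hw2 : (1 - (((1 - γ) / (2 - γ) : ℝ):ℂ) * z) = 1 - ((b:ℝ):ℂ)*z := by rw [hbdef]
  have hN : ((1 - ((1 / (γ * (2 - γ)) : ℝ) : ℂ)) * (1 - (γ : ℂ) * z / 2)
        + ((1 / (γ * (2 - γ)) : ℝ) : ℂ) * (1 + (γ : ℂ) * z / 2))
      = 1 + ((c:ℝ):ℂ)*z := by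
    rw [hcdef]
    have hγc : (γ:ℂ) ≠ 0 := by exact_mod_cast hγ0.ne'
    have h2γc : ((2:ℂ) - γ) ≠ 0 := by exact_mod_cast h2γ.ne'
    push_cast
    field_simp
    ring
  have hns1 : Complex.normSq (1 - (γ:ℂ) * z / 2) = (1 - a*z.re)^2 + a^2*z.im^2 := by
    rw [hw1, trbdf2_nsq_sub]
  have hns2 : Complex.normSq (1 - (((1 - γ) / (2 - γ) : ℝ):ℂ) * z)
      = (1 - b*z.re)^2 + b^2*z.im^2 := by
    rw [hw2, trbdf2_nsq_sub]
  have haz : 1 - a*z.re ≥ 1 := by nlinarith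
  have hbz : 1 - b*z.re ≥ 1 := by nlinarith
  have h1ne : (1 - (γ:ℂ) * z / 2) ≠ 0 := by
    rw [← Complex.normSq_pos, hns1]; nlinarith [sq_nonneg (a*z.im)]
  have h2ne : (1 - (((1 - γ) / (2 - γ) : ℝ):ℂ) * z) ≠ 0 := by
    rw [← Complex.normSq_pos, hns2]; nlinarith [sq_nonneg (b*z.im)]
  have hDne : (1 - (γ:ℂ) * z / 2) * (1 - (((1 - γ) / (2 - γ) : ℝ):ℂ) * z) ≠ 0 :=
    mul_ne_zero h1ne h2ne
  refine ⟨hDne, ?_⟩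
  rw [trbdf2StabilityFunction, norm_div, div_le_one (norm_pos_iff.mpr hDne)]
  have key := trbdf2_key a b c z.re z.im ha hb hc habc hz
  have hle : Complex.normSq ((1 - ((1 / (γ * (2 - γ)) : ℝ) : ℂ)) * (1 - (γ : ℂ) * z / 2)
        + ((1 / (γ * (2 - γ)) : ℝ) : ℂ) * (1 + (γ : ℂ) * z / 2))
      ≤ Complex.normSq ((1 - (γ : ℂ) * z / 2) * (1 - (((1 - γ) / (2 - γ) : ℝ):ℂ) * z)) := by
    rw [hN, trbdf2_nsq_add, map_mul, hns1, hns2]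
    linarith [key]
  rw [Complex.norm_def, Complex.norm_def]
  exact Real.sqrt_le_sqrt hle
end

section
/- Let γ ∈ (0,1), γ₂ = (1−γ)/(2−γ), γ₃ = 1/(γ(2−γ)), and let R(z) = ((1−γ₃)(1−γz/2) + γ₃(1+γz/2)) / ((1−γz/2)(1−γ₂z)) be the stability function of TR-BDF2. Then for every real y ≠ 0 one has |R(iy)| < 1, and |R(iy)| → 0 as |y| → ∞; that is, the TR-BDF2 method strictly damps every nonzero oscillation frequency, with damping tending to total damping for the highest frequencies. -/
open Complex Filter

/-- TR-BDF2 strictly damps every nonzero oscillation frequency, and the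
damping tends to total damping for the highest frequencies. -/
theorem trbdf2_damps_every_frequency
    (γ : ℝ) (hγ : γ ∈ Set.Ioo (0 : ℝ) 1)
    (γ₂ γ₃ : ℝ) (hγ₂ : γ₂ = (1 - γ) / (2 - γ)) (hγ₃ : γ₃ = 1 / (γ * (2 - γ))) :
    (∀ y : ℝ, y ≠ 0 →
        ‖trbdf2StabilityFunction γ γ₂ γ₃ (Complex.I * (y : ℂ))‖ < 1) ∧
      Tendsto (fun y : ℝ =>
          ‖trbdf2StabilityFunction γ γ₂ γ₃ (Complex.I * (y : ℂ))‖)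
        (cocompact ℝ) (nhds 0) := by
  obtain ⟨hγ0, hγ1⟩ := hγ
  have h2γ : (0:ℝ) < 2 - γ := by linarith
  have hγ₂pos : 0 < γ₂ := by
    rw [hγ₂]; exact div_pos (by linarith) h2γ
  set a : ℝ := (2*γ₃ - 1)*γ/2 with ha
  set b : ℝ := γ*γ₂/2 with hb
  set c : ℝ := γ/2 + γ₂ with hc
  have hbpos : (0:ℝ) < b := by rw [hb]; positivity
  have hkey : c^2 = a^2 + 2*b := by
    rw [ha, hb, hc, hγ₂, hγ₃]
    have hγne : γ ≠ 0 := ne_of_gt hγ0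
    have h2γne : (2:ℝ) - γ ≠ 0 := ne_of_gt h2γ
    field_simp
    ring
  set f : ℝ → ℝ := fun y =>
    ‖trbdf2StabilityFunction γ γ₂ γ₃ (Complex.I * (y : ℂ))‖ with hf
  have hf0 : ∀ y : ℝ, 0 ≤ f y := fun y => norm_nonneg _
  have hden : ∀ y : ℝ, (1 - b*y^2)^2 + (c*y)^2 = 1 + (a*y)^2 + b^2*y^4 := by
    intro y
    linear_combination y^2 * hkey
  have habs : ∀ y : ℝ, f y ^ 2 = (1 + (a*y)^2) / (1 + (a*y)^2 + b^2*y^4) := by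
    intro y
    rw [hf]
    simp only [trbdf2StabilityFunction]
    rw [norm_div, div_pow, Complex.sq_norm, Complex.sq_norm]
    have hnum : ((1 - (γ₃:ℂ)) * (1 - (γ:ℂ) * (Complex.I * (y:ℂ)) / 2) +
        (γ₃:ℂ) * (1 + (γ:ℂ) * (Complex.I * (y:ℂ)) / 2))
        = ((1:ℝ):ℂ) + ((a*y : ℝ):ℂ) * Complex.I := by
      push_cast [ha]; ring
    have hdenc : ((1 - (γ:ℂ) * (Complex.I * (y:ℂ)) / 2) * (1 - (γ₂:ℂ) * (Complex.I * (y:ℂ))))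
        = ((1 - b*y^2 : ℝ):ℂ) + ((-(c*y) : ℝ):ℂ) * Complex.I := by
      push_cast [hb, hc]
      linear_combination ((γ:ℂ) * (γ₂:ℂ) * (y:ℂ)^2 / 2) * Complex.I_sq
    rw [hnum, hdenc, Complex.normSq_add_mul_I, Complex.normSq_add_mul_I, ← hden y]
    ring_nf
  have hdenpos : ∀ y : ℝ, 0 < 1 + (a*y)^2 + b^2*y^4 := by
    intro y; positivity
  constructor
  · intro y hy
    have hsq : f y ^ 2 < 1 := by
      rw [habs y, div_lt_one (hdenpos y)]
      have : 0 < b^2 * y^4 := by positivity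
      linarith
    nlinarith [hsq, hf0 y]
  · set C : ℝ := Real.sqrt (1 + a^2) / b with hC
    have hCnn : 0 ≤ C := by positivity
    have hbound : ∀ y : ℝ, 1 ≤ |y| → f y ≤ C * |y|⁻¹ := by
      intro y hy
      have hy0 : y ≠ 0 := by
        intro h; rw [h] at hy; norm_num at hy
      have hy2 : (1:ℝ) ≤ y^2 := by
        nlinarith [_root_.sq_abs y, hy]
      have hrhsnn : 0 ≤ C * |y|⁻¹ := by positivity
      refine le_of_pow_le_pow_left₀ two_ne_zero hrhsnn ?_
      rw [habs y]
      have hrhs : (C * |y|⁻¹)^2 = (1 + a^2) / (b^2 * y^2) := by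
        rw [hC, mul_pow, div_pow, Real.sq_sqrt (by positivity), inv_pow, _root_.sq_abs]
        field_simp
      rw [hrhs, div_le_div_iff₀ (hdenpos y) (by positivity)]
      have hy2' : (0:ℝ) ≤ y^2 - 1 := by linarith
      nlinarith [mul_nonneg (mul_nonneg (sq_nonneg b) (sq_nonneg y)) hy2',
        sq_nonneg (a*y), sq_nonneg a, sq_nonneg (a*b*y^2), sq_nonneg (a^2*y),
        mul_nonneg (sq_nonneg a) (sq_nonneg (a*y))]
    have hnorm : Tendsto (fun y : ℝ => |y|) (cocompact ℝ) atTop := by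
      exact (tendsto_norm_cocompact_atTop (E := ℝ)).congr fun y => Real.norm_eq_abs y
    have hg : Tendsto (fun y : ℝ => C * |y|⁻¹) (cocompact ℝ) (nhds 0) := by
      have := (hnorm.inv_tendsto_atTop).const_mul C
      simpa using this
    refine squeeze_zero' ?_ ?_ hg
    · exact Eventually.of_forall hf0
    · exact (hnorm.eventually_ge_atTop 1).mono fun y hy => hbound y hy
end

section
/- Let γ ∈ (0,1), γ₂ = (1−γ)/(2−γ), γ₃ = 1/(γ(2−γ)), and let R(z) = ((1−γ₃)(1−γz/2) + γ₃(1+γz/2)) / ((1−γz/2)(1−γ₂z)) be the stability function of TR-BDF2. Then there exist constants C > 0 and δ > 0 such that for all z ∈ ℂ with |z| ≤ δ one has |R(z) − e^z| ≤ C|z|³; equivalently, the Taylor expansion of R at 0 satisfies R(z) = 1 + z + z²/2 + O(z³). That is, the TR-BDF2 method is second order accurate for every γ ∈ (0,1). -/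
open Complex

set_option maxHeartbeats 1000000 in
/-- The TR-BDF2 method is second order accurate for every γ ∈ (0,1):
its stability function agrees with e^z up to O(z³). -/
theorem trbdf2_second_order
    (γ : ℝ) (hγ : γ ∈ Set.Ioo (0 : ℝ) 1)
    (γ₂ γ₃ : ℝ) (hγ₂ : γ₂ = (1 - γ) / (2 - γ)) (hγ₃ : γ₃ = 1 / (γ * (2 - γ))) :
    ∃ C : ℝ, 0 < C ∧ ∃ δ : ℝ, 0 < δ ∧
      ∀ z : ℂ, ‖z‖ ≤ δ →
        ‖trbdf2StabilityFunction γ γ₂ γ₃ z - Complex.exp z‖ ≤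
          C * ‖z‖ ^ 3 := by
  obtain ⟨hγ0, hγ1⟩ := hγ
  have h2γ : (0:ℝ) < 2 - γ := by linarith
  -- order conditions
  have hr1 : γ₃ * γ + γ₂ = 1 := by
    rw [hγ₂, hγ₃]; field_simp; ring
  have hr2 : γ / 2 + γ₂ - γ * γ₂ / 2 = 1/2 := by
    rw [hγ₂]; field_simp; ring
  have hγ₂0 : 0 ≤ γ₂ := by
    rw [hγ₂]; apply div_nonneg <;> linarith
  have hγ₂h : γ₂ ≤ 1/2 := by
    rw [hγ₂, div_le_iff₀ h2γ]; linarith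
  set k3 : ℂ := ((γ:ℂ)/2 + (γ₂:ℂ))/2 - (γ:ℂ)*(γ₂:ℂ)/2 with hk3
  set k4 : ℂ := -((γ:ℂ)*(γ₂:ℂ))/4 with hk4
  refine ⟨4*(‖k3‖ + ‖k4‖) + 3, by positivity, 1, one_pos, ?_⟩
  intro z hz
  have hz0 : 0 ≤ ‖z‖ := norm_nonneg z
  set D : ℂ := (1 - (γ:ℂ) * z / 2) * (1 - (γ₂:ℂ) * z) with hD
  set N : ℂ := (1 - (γ₃ : ℂ)) * (1 - (γ : ℂ) * z / 2) + (γ₃ : ℂ) * (1 + (γ : ℂ) * z / 2)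
    with hN
  -- bounds on the two denominator factors
  have ha1 : ‖(γ:ℂ) * z / 2‖ ≤ 1/2 := by
    rw [norm_div, norm_mul, Complex.norm_real, Real.norm_eq_abs, Complex.norm_two]
    rw [abs_of_pos hγ0]
    nlinarith
  have ha2 : ‖(γ₂:ℂ) * z‖ ≤ 1/2 := by
    rw [norm_mul, Complex.norm_real, Real.norm_eq_abs, _root_.abs_of_nonneg hγ₂0]
    nlinarith
  have hb1 : (1:ℝ)/2 ≤ ‖1 - (γ:ℂ) * z / 2‖ := by
    have := norm_sub_norm_le (1:ℂ) ((γ:ℂ) * z / 2)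
    simp only [norm_one] at this
    linarith
  have hb2 : (1:ℝ)/2 ≤ ‖1 - (γ₂:ℂ) * z‖ := by
    have := norm_sub_norm_le (1:ℂ) ((γ₂:ℂ) * z)
    simp only [norm_one] at this
    linarith
  have hc1 : ‖1 - (γ:ℂ) * z / 2‖ ≤ 3/2 := by
    calc ‖1 - (γ:ℂ) * z / 2‖ ≤ ‖1‖ + ‖(γ:ℂ) * z / 2‖ :=
          norm_sub_le _ _
      _ ≤ 3/2 := by rw [norm_one]; linarith
  have hc2 : ‖1 - (γ₂:ℂ) * z‖ ≤ 3/2 := by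
    calc ‖1 - (γ₂:ℂ) * z‖ ≤ ‖1‖ + ‖(γ₂:ℂ) * z‖ :=
          norm_sub_le _ _
      _ ≤ 3/2 := by rw [norm_one]; linarith
  have hDlb : (1:ℝ)/4 ≤ ‖D‖ := by
    rw [hD, norm_mul]; nlinarith
  have hDub : ‖D‖ ≤ 3 := by
    rw [hD, norm_mul]; nlinarith
  have hDne : D ≠ 0 := by
    intro h; rw [h, norm_zero] at hDlb; linarith
  -- the key rewriting
  have key : trbdf2StabilityFunction γ γ₂ γ₃ z - Complex.exp z
      = (N - Complex.exp z * D) / D := by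
    rw [trbdf2StabilityFunction, ← hD, ← hN]
    field_simp
  -- cast order conditions
  have hcc1 : (γ₃:ℂ) * (γ:ℂ) + (γ₂:ℂ) = 1 := by exact_mod_cast hr1
  have hcc2 : (γ:ℂ) / 2 + (γ₂:ℂ) - (γ:ℂ) * (γ₂:ℂ) / 2 = 1/2 := by
    have h := congrArg Complex.ofReal hr2
    push_cast at h
    exact h
  have hpoly : N - (1 + z + z^2/2) * D = k3 * z^3 + k4 * z^4 := by
    rw [hN, hD, hk3, hk4]
    linear_combination z * hcc1 + z^2 * hcc2
  have hsplit : N - Complex.exp z * D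
      = k3 * z^3 + k4 * z^4 - (Complex.exp z - (1 + z + z^2/2)) * D := by
    linear_combination hpoly
  -- exp remainder bound
  have hrem : ‖Complex.exp z - (1 + z + z^2/2)‖ ≤ ‖z‖ ^ 3 * (2/9) := by
    have h := Complex.exp_bound hz (n := 3) (by norm_num)
    have e : ∑ m ∈ Finset.range 3, z ^ m / m.factorial = 1 + z + z^2/2 := by
      simp [Finset.sum_range_succ, Nat.factorial]
    rw [e] at h
    norm_num [Nat.factorial] at h
    linarith
  -- assemble
  have hz4 : ‖z‖ ^ 4 ≤ ‖z‖ ^ 3 := by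
    calc ‖z‖ ^ 4 = ‖z‖ ^ 3 * ‖z‖ := by ring
      _ ≤ ‖z‖ ^ 3 * 1 := by
          apply mul_le_mul_of_nonneg_left hz (by positivity)
      _ = ‖z‖ ^ 3 := mul_one _
  have hnum : ‖N - Complex.exp z * D‖
      ≤ (‖k3‖ + ‖k4‖ + 2/3) * ‖z‖ ^ 3 := by
    rw [hsplit]
    calc ‖k3 * z^3 + k4 * z^4 - (Complex.exp z - (1 + z + z^2/2)) * D‖
        ≤ ‖k3 * z^3 + k4 * z^4‖
            + ‖(Complex.exp z - (1 + z + z^2/2)) * D‖ :=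
          norm_sub_le _ _
      _ ≤ ‖k3 * z^3‖ + ‖k4 * z^4‖
            + ‖(Complex.exp z - (1 + z + z^2/2)) * D‖ := by
          linarith [norm_add_le (k3 * z^3) (k4 * z^4)]
      _ ≤ ‖k3‖ * ‖z‖ ^ 3 + ‖k4‖ * ‖z‖ ^ 4
            + (‖z‖ ^ 3 * (2/9)) * 3 := by
          rw [norm_mul, norm_mul, norm_mul, norm_pow, norm_pow]
          have h1 : ‖Complex.exp z - (1 + z + z^2/2)‖ * ‖D‖
              ≤ (‖z‖ ^ 3 * (2/9)) * 3 := by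
            apply mul_le_mul hrem hDub (by positivity) (by positivity)
          linarith
      _ ≤ (‖k3‖ + ‖k4‖ + 2/3) * ‖z‖ ^ 3 := by
          have := mul_le_mul_of_nonneg_left hz4 (norm_nonneg k4)
          nlinarith
  rw [key, norm_div]
  rw [div_le_iff₀ (by linarith : (0:ℝ) < ‖D‖)]
  calc ‖N - Complex.exp z * D‖
      ≤ (‖k3‖ + ‖k4‖ + 2/3) * ‖z‖ ^ 3 := hnum
    _ ≤ (4*(‖k3‖ + ‖k4‖) + 3) * ‖z‖ ^ 3 * (1/4) := by
        have h3 : (0:ℝ) ≤ ‖z‖ ^ 3 := by positivity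
        nlinarith [norm_nonneg k3, norm_nonneg k4]
    _ ≤ (4*(‖k3‖ + ‖k4‖) + 3) * ‖z‖ ^ 3 * ‖D‖ := by
        apply mul_le_mul_of_nonneg_left hDlb (by positivity)
end

section
/- Let γ ∈ (0,1), γ₂ = (1−γ)/(2−γ), γ₃ = 1/(γ(2−γ)), let λ ∈ ℂ with Re λ ≤ 0, T > 0 and u⁰ ∈ ℂ. For each integer N ≥ 1 set h = T/N and define the TR-BDF2 iterates u^{k+1} = R(hλ)·u^k for 0 ≤ k < N, where R(z) = ((1−γ₃)(1−γz/2) + γ₃(1+γz/2)) / ((1−γz/2)(1−γ₂z)). Then there exists a constant C ≥ 0 (depending on γ, λ, T and u⁰ but not on N) such that |u^N − e^{λT}u⁰| ≤ C/N² for every N ≥ 1; i.e., the TR-BDF2 method converges with second order on the linear test problem y' = λy. -/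
set_option maxHeartbeats 1000000


open Complex

set_option maxHeartbeats 1000000 in
lemma abs_pow_sub_pow_le' (x y : ℂ) (M : ℝ) (hM : 1 ≤ M) (hx : ‖x‖ ≤ M)
    (hy : ‖y‖ ≤ M) : ∀ n : ℕ,
    ‖x ^ n - y ^ n‖ ≤ n * M ^ n * ‖x - y‖ := by
  intro n
  induction n with
  | zero => simp
  | succ n ih =>
    have hxy : x ^ (n + 1) - y ^ (n + 1) = x ^ n * (x - y) + (x ^ n - y ^ n) * y := by ring
    have hM0 : (0 : ℝ) ≤ M := le_trans zero_le_one hM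
    have h1 : ‖x ^ n * (x - y)‖ ≤ M ^ n * ‖x - y‖ := by
      rw [norm_mul, norm_pow]
      gcongr
    have h2 : ‖(x ^ n - y ^ n) * y‖ ≤ (n * M ^ n * ‖x - y‖) * M := by
      rw [norm_mul]
      exact mul_le_mul ih hy (norm_nonneg _)
        (by positivity)
    have hMn : M ^ n ≤ M ^ (n + 1) := pow_le_pow_right₀ hM (Nat.le_succ n)
    calc ‖x ^ (n + 1) - y ^ (n + 1)‖
        ≤ ‖x ^ n * (x - y)‖ + ‖(x ^ n - y ^ n) * y‖ := by
          rw [hxy]; exact norm_add_le _ _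
      _ ≤ M ^ n * ‖x - y‖ + (n * M ^ n * ‖x - y‖) * M := by
          exact add_le_add h1 h2
      _ ≤ (n + 1 : ℕ) * M ^ (n + 1) * ‖x - y‖ := by
          push_cast
          have habs : (0 : ℝ) ≤ ‖x - y‖ := norm_nonneg _
          have h3 : M ^ n * ‖x - y‖ ≤ M ^ (n + 1) * ‖x - y‖ := by
            gcongr
          have h4 : (n * M ^ n * ‖x - y‖) * M = n * (M ^ (n+1) * ‖x-y‖) := by
            ring
          rw [h4]
          nlinarith [mul_nonneg (pow_nonneg hM0 (n+1)) habs]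

lemma trbdf2_local (γ : ℝ) (hγ : γ ∈ Set.Ioo (0 : ℝ) 1)
    (γ₂ γ₃ : ℝ) (hγ₂ : γ₂ = (1 - γ) / (2 - γ)) (hγ₃ : γ₃ = 1 / (γ * (2 - γ)))
    (z : ℂ) (hz : ‖z‖ ≤ 1 / 2) :
    ‖trbdf2StabilityFunction γ γ₂ γ₃ z - Complex.exp z‖ ≤
      4 * ‖z‖ ^ 3 := by
  obtain ⟨hγ0, hγ1⟩ := hγ
  have h2γ : (0 : ℝ) < 2 - γ := by linarith
  have hγ₂0 : 0 ≤ γ₂ := by rw [hγ₂]; apply div_nonneg <;> linarith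
  have hγ₂half : γ₂ ≤ 1 / 2 := by
    rw [hγ₂, div_le_iff₀ h2γ]; nlinarith
  set num : ℂ := (1 - (γ₃ : ℂ)) * (1 - (γ : ℂ) * z / 2) + (γ₃ : ℂ) * (1 + (γ : ℂ) * z / 2)
    with hnum
  set den : ℂ := (1 - (γ : ℂ) * z / 2) * (1 - (γ₂ : ℂ) * z) with hden
  have hz0 : (0 : ℝ) ≤ ‖z‖ := norm_nonneg _
  -- bounds on factors of den
  have hb1 : ‖(γ : ℂ) * z / 2‖ ≤ 1 / 4 := by
    have h2 : ‖(2 : ℂ)‖ = 2 := by norm_num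
    rw [norm_div, norm_mul, Complex.norm_real, Real.norm_eq_abs, h2, _root_.abs_of_pos hγ0,
      div_le_iff₀ (by norm_num : (0:ℝ) < 2)]
    nlinarith
  have hb2 : ‖(γ₂ : ℂ) * z‖ ≤ 1 / 4 := by
    rw [norm_mul, Complex.norm_real, Real.norm_eq_abs, _root_.abs_of_nonneg hγ₂0]
    nlinarith
  have hf1lo : (3 : ℝ) / 4 ≤ ‖1 - (γ : ℂ) * z / 2‖ := by
    have := norm_sub_norm_le (1 : ℂ) ((γ : ℂ) * z / 2)
    simp only [norm_one] at this
    linarith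
  have hf2lo : (3 : ℝ) / 4 ≤ ‖1 - (γ₂ : ℂ) * z‖ := by
    have := norm_sub_norm_le (1 : ℂ) ((γ₂ : ℂ) * z)
    simp only [norm_one] at this
    linarith
  have hf1hi : ‖1 - (γ : ℂ) * z / 2‖ ≤ 5 / 4 := by
    calc ‖1 - (γ : ℂ) * z / 2‖ ≤ ‖1‖ + ‖(γ : ℂ) * z / 2‖ :=
      norm_sub_le _ _
    _ ≤ 5 / 4 := by rw [norm_one]; linarith
  have hf2hi : ‖1 - (γ₂ : ℂ) * z‖ ≤ 5 / 4 := by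
    calc ‖1 - (γ₂ : ℂ) * z‖ ≤ ‖1‖ + ‖(γ₂ : ℂ) * z‖ :=
      norm_sub_le _ _
    _ ≤ 5 / 4 := by rw [norm_one]; linarith
  have hdenlo : (9 : ℝ) / 16 ≤ ‖den‖ := by
    rw [hden, norm_mul]; nlinarith
  have hdenhi : ‖den‖ ≤ 25 / 16 := by
    rw [hden, norm_mul]; nlinarith
  have hdenne : den ≠ 0 := by
    intro h
    rw [h, norm_zero] at hdenlo
    norm_num at hdenlo
  -- key algebraic identity
  set α : ℝ := (γ ^ 2 - 2 * γ + 2) / (4 * (2 - γ)) with hα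
  set β : ℝ := γ * (1 - γ) / (4 * (2 - γ)) with hβ
  have hγC : (γ : ℂ) ≠ 0 := Complex.ofReal_ne_zero.mpr (ne_of_gt hγ0)
  have h2γC : (2 - (γ : ℂ)) ≠ 0 := by
    have : ((2 - γ : ℝ) : ℂ) ≠ 0 := Complex.ofReal_ne_zero.mpr (ne_of_gt h2γ)
    push_cast at this; exact this
  have hkey : num - (1 + z + z ^ 2 / 2) * den = (α : ℂ) * z ^ 3 - (β : ℂ) * z ^ 4 := by
    rw [hnum, hden, hα, hβ, hγ₂, hγ₃]
    push_cast
    field_simp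
    ring
  -- bounds on α, β
  have hα0 : 0 ≤ α := by
    rw [hα]; apply div_nonneg <;> nlinarith
  have hαle : α ≤ 1 / 2 := by
    rw [hα, div_le_iff₀ (by linarith)]; nlinarith
  have hβ0 : 0 ≤ β := by rw [hβ]; apply div_nonneg <;> nlinarith
  have hβle : β ≤ 1 / 16 := by
    rw [hβ, div_le_iff₀ (by linarith)]; nlinarith
  -- Taylor remainder
  have hz1 : ‖z‖ ≤ 1 := by linarith
  have htaylor : ‖Complex.exp z - (1 + z + z ^ 2 / 2)‖ ≤
      ‖z‖ ^ 3 * (2 / 9) := by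
    have h := Complex.exp_bound hz1 (n := 3) (by norm_num)
    have hsum : (∑ m ∈ Finset.range 3, z ^ m / (m.factorial : ℂ)) = 1 + z + z ^ 2 / 2 := by
      simp [Finset.sum_range_succ, Nat.factorial]
    rw [hsum] at h
    convert h using 2
    norm_num [Nat.factorial]
  -- combine
  have hnum_bound : ‖num - Complex.exp z * den‖ ≤ (9 / 4) * ‖z‖ ^ 3 := by
    have hsplit : num - Complex.exp z * den =
        (num - (1 + z + z ^ 2 / 2) * den) - (Complex.exp z - (1 + z + z ^ 2 / 2)) * den := by
      ring
    have hz4 : ‖z‖ ^ 4 ≤ ‖z‖ ^ 3 * (1 / 2) := by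
      have : ‖z‖ ^ 4 = ‖z‖ ^ 3 * ‖z‖ := by ring
      rw [this]
      gcongr
    calc ‖num - Complex.exp z * den‖
        ≤ ‖num - (1 + z + z ^ 2 / 2) * den‖ +
            ‖(Complex.exp z - (1 + z + z ^ 2 / 2)) * den‖ := by
          rw [hsplit]; exact norm_sub_le _ _
      _ ≤ (α * ‖z‖ ^ 3 + β * ‖z‖ ^ 4) +
            (‖z‖ ^ 3 * (2 / 9)) * (25 / 16) := by
          apply add_le_add
          · rw [hkey]
            calc ‖(α : ℂ) * z ^ 3 - (β : ℂ) * z ^ 4‖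
                ≤ ‖(α : ℂ) * z ^ 3‖ + ‖(β : ℂ) * z ^ 4‖ :=
                  norm_sub_le _ _
              _ = α * ‖z‖ ^ 3 + β * ‖z‖ ^ 4 := by
                  rw [norm_mul, norm_mul, norm_pow, norm_pow, Complex.norm_real, Real.norm_eq_abs,
                    Complex.norm_real, Real.norm_eq_abs, _root_.abs_of_nonneg hα0, _root_.abs_of_nonneg hβ0]
          · rw [norm_mul]
            apply mul_le_mul htaylor hdenhi (norm_nonneg _) (by positivity)
      _ ≤ (9 / 4) * ‖z‖ ^ 3 := by nlinarith [pow_nonneg hz0 3, pow_nonneg hz0 4]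
  -- final
  have hRform : trbdf2StabilityFunction γ γ₂ γ₃ z - Complex.exp z =
      (num - Complex.exp z * den) / den := by
    rw [trbdf2StabilityFunction, ← hnum, ← hden]
    field_simp
  rw [hRform, norm_div]
  rw [div_le_iff₀ (by linarith : (0 : ℝ) < ‖den‖)]
  calc ‖num - Complex.exp z * den‖ ≤ (9 / 4) * ‖z‖ ^ 3 := hnum_bound
    _ ≤ 4 * ‖z‖ ^ 3 * (9 / 16) := by nlinarith [pow_nonneg hz0 3]
    _ ≤ 4 * ‖z‖ ^ 3 * ‖den‖ := by
        gcongr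

/-- Second order convergence of the TR-BDF2 method on the linear test
problem y' = λy with Re λ ≤ 0. -/
theorem trbdf2_second_order_convergence
    (γ : ℝ) (hγ : γ ∈ Set.Ioo (0 : ℝ) 1)
    (γ₂ γ₃ : ℝ) (hγ₂ : γ₂ = (1 - γ) / (2 - γ)) (hγ₃ : γ₃ = 1 / (γ * (2 - γ)))
    (lam : ℂ) (hlam : lam.re ≤ 0) (T : ℝ) (hT : 0 < T) (u0 : ℂ) :
    ∃ C : ℝ, 0 ≤ C ∧ ∀ N : ℕ, 1 ≤ N →
      ‖
          ((trbdf2StabilityFunction γ γ₂ γ₃ (((T / N : ℝ) : ℂ) * lam)) ^ N * u0 -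
            Complex.exp (lam * (T : ℂ)) * u0)‖ ≤ C / (N : ℝ) ^ 2 := by
  set A : ℝ := ‖lam‖ with hA
  have hA0 : 0 ≤ A := norm_nonneg lam
  set N₀ : ℕ := ⌈2 * T * A⌉₊ with hN₀
  set f : ℕ → ℝ := fun n =>
    ‖(trbdf2StabilityFunction γ γ₂ γ₃ (((T / n : ℝ) : ℂ) * lam)) ^ n * u0 -
      Complex.exp (lam * (T : ℂ)) * u0‖ with hf
  have hf0 : ∀ n, 0 ≤ f n := fun n => norm_nonneg _
  set Ctail : ℝ := 4 * ‖u0‖ * Real.exp (T * A) * T ^ 3 * A ^ 3 with hCtail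
  have hCtail0 : 0 ≤ Ctail := by
    rw [hCtail]; positivity
  set C : ℝ := Ctail + ∑ n ∈ Finset.range (N₀ + 1), (n : ℝ) ^ 2 * f n with hC
  have hsum0 : 0 ≤ ∑ n ∈ Finset.range (N₀ + 1), (n : ℝ) ^ 2 * f n :=
    Finset.sum_nonneg fun n _ => mul_nonneg (by positivity) (hf0 n)
  refine ⟨C, by rw [hC]; linarith, ?_⟩
  intro N hN
  have hNpos : (0 : ℝ) < (N : ℝ) := by exact_mod_cast hN
  have hNsq : (0 : ℝ) < (N : ℝ) ^ 2 := by positivity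
  show f N ≤ C / (N : ℝ) ^ 2
  by_cases hcase : N ≤ N₀
  · -- small N: use the sum
    have hmem : N ∈ Finset.range (N₀ + 1) := Finset.mem_range.mpr (Nat.lt_succ_of_le hcase)
    have hle : (N : ℝ) ^ 2 * f N ≤ ∑ n ∈ Finset.range (N₀ + 1), (n : ℝ) ^ 2 * f n :=
      Finset.single_le_sum (f := fun n : ℕ => (n : ℝ) ^ 2 * f n)
        (fun n _ => mul_nonneg (by positivity) (hf0 n)) hmem
    rw [le_div_iff₀ hNsq]
    calc f N * (N : ℝ) ^ 2 = (N : ℝ) ^ 2 * f N := by ring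
      _ ≤ ∑ n ∈ Finset.range (N₀ + 1), (n : ℝ) ^ 2 * f n := hle
      _ ≤ C := by rw [hC]; linarith
  · -- large N: tail estimate
    push_neg at hcase
    have hNge : 2 * T * A ≤ (N : ℝ) := by
      calc 2 * T * A ≤ (⌈2 * T * A⌉₊ : ℝ) := Nat.le_ceil _
        _ ≤ (N : ℝ) := by exact_mod_cast le_of_lt hcase
    set t : ℝ := T / N * A with ht
    have ht0 : 0 ≤ t := by positivity
    have hthalf : t ≤ 1 / 2 := by
      rw [ht, div_mul_eq_mul_div, div_le_iff₀ hNpos]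
      linarith
    set z : ℂ := ((T / N : ℝ) : ℂ) * lam with hz
    have habsz : ‖z‖ = t := by
      rw [hz, norm_mul, Complex.norm_real, Real.norm_eq_abs, _root_.abs_of_pos (by positivity), ht, hA]
    have hzhalf : ‖z‖ ≤ 1 / 2 := by rw [habsz]; exact hthalf
    have hloc := trbdf2_local γ hγ γ₂ γ₃ hγ₂ hγ₃ z hzhalf
    rw [habsz] at hloc
    set R : ℂ := trbdf2StabilityFunction γ γ₂ γ₃ z with hR
    -- |exp z| ≤ 1
    have hzre : z.re ≤ 0 := by
      rw [hz]
      simp only [Complex.mul_re, Complex.ofReal_re, Complex.ofReal_im, zero_mul, sub_zero]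
      have : (0 : ℝ) ≤ T / N := by positivity
      exact mul_nonpos_of_nonneg_of_nonpos this hlam
    have hexpz : ‖Complex.exp z‖ ≤ 1 := by
      rw [Complex.norm_exp]
      calc Real.exp z.re ≤ Real.exp 0 := Real.exp_le_exp.mpr hzre
        _ = 1 := Real.exp_zero
    -- |R| ≤ 1 + t
    have hcube : 4 * t ^ 3 ≤ t := by
      nlinarith [mul_nonneg (mul_nonneg ht0 (by linarith : (0:ℝ) ≤ 1 - 2*t))
        (by linarith : (0:ℝ) ≤ 1 + 2*t)]
    have hRle : ‖R‖ ≤ 1 + t := by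
      calc ‖R‖ ≤ ‖Complex.exp z‖ + ‖R - Complex.exp z‖ := by
            have := norm_add_le (Complex.exp z) (R - Complex.exp z)
            simpa using this
        _ ≤ 1 + 4 * t ^ 3 := add_le_add hexpz hloc
        _ ≤ 1 + t := by linarith
    have hM1 : (1 : ℝ) ≤ 1 + t := by linarith
    have hpow := abs_pow_sub_pow_le' R (Complex.exp z) (1 + t) hM1 hRle
      (le_trans hexpz hM1) N
    -- (1+t)^N ≤ exp (T*A)
    have hMexp : (1 + t) ^ N ≤ Real.exp (T * A) := by
      have h1 : (1 + t) ^ N ≤ Real.exp t ^ N := by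
        apply pow_le_pow_left₀ (by linarith)
        linarith [Real.add_one_le_exp t]
      have h2 : Real.exp t ^ N = Real.exp ((N : ℝ) * t) := (Real.exp_nat_mul t N).symm
      have h3 : (N : ℝ) * t = T * A := by
        rw [ht]; field_simp
      rw [h2, h3] at h1
      exact h1
    -- (exp z)^N = exp (lam * T)
    have hexpN : (Complex.exp z) ^ N = Complex.exp (lam * (T : ℂ)) := by
      rw [← Complex.exp_nat_mul]
      congr 1
      rw [hz]
      have hNne : ((N : ℂ)) ≠ 0 := Nat.cast_ne_zero.mpr (Nat.one_le_iff_ne_zero.mp hN)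
      push_cast
      field_simp
    -- assemble
    have hfeq : f N = ‖R ^ N - (Complex.exp z) ^ N‖ * ‖u0‖ := by
      rw [hf]
      simp only
      rw [hexpN, ← norm_mul]
      congr 1
      ring
    have hstep : f N ≤ (N : ℝ) * Real.exp (T * A) * (4 * t ^ 3) * ‖u0‖ := by
      rw [hfeq]
      have hb : ‖R ^ N - (Complex.exp z) ^ N‖ ≤
          (N : ℝ) * Real.exp (T * A) * (4 * t ^ 3) := by
        calc ‖R ^ N - (Complex.exp z) ^ N‖
            ≤ (N : ℝ) * (1 + t) ^ N * ‖R - Complex.exp z‖ := hpow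
          _ ≤ (N : ℝ) * Real.exp (T * A) * (4 * t ^ 3) := by
              apply mul_le_mul
              · exact mul_le_mul_of_nonneg_left hMexp (by positivity)
              · exact hloc
              · exact norm_nonneg _
              · positivity
      exact mul_le_mul_of_nonneg_right hb (norm_nonneg _)
    have hfinal : (N : ℝ) * Real.exp (T * A) * (4 * t ^ 3) * ‖u0‖ = Ctail / (N:ℝ)^2 := by
      rw [hCtail, ht]
      field_simp
    calc f N ≤ (N : ℝ) * Real.exp (T * A) * (4 * t ^ 3) * ‖u0‖ := hstep
      _ = Ctail / (N : ℝ) ^ 2 := hfinal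
      _ ≤ C / (N : ℝ) ^ 2 := by
          gcongr
          rw [hC]; linarith
end
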